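/- Let G be an edge-colored complete graph on n vertices and k ≥ 1 with Δ^mon(G) ≤ n − 3k + 1. Then either G contains k pairwise vertex-disjoint properly edge-colored cycles of length at most 4, or every vertex of G is contained in a properly edge-colored cycle of length 3 or 4. -/

import Mathlib

/-- Number of edges of color `a` incident with `v` (monochromatic degree). -/
noncomputable def monDeg {V : Type*} (col : V → V → ℕ) (v : V) (a : ℕ) : ℕ :=
  {u | u ≠ v ∧ col v u = a}.ncard

/-- Color degree of a vertex: number of distinct colors on incident edges. -/
noncomputable def colorDeg {V : Type*} (col : V → V → ℕ) (v : V) : ℕ :=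
  (col v '' {u | u ≠ v}).ncard

/-- Maximum monochromatic degree Δ^mon. -/
noncomputable def maxMonDeg {V : Type*} (col : V → V → ℕ) : ℕ :=
  sSup {d | ∃ v a, d = monDeg col v a}

/-- Number of colors appearing on edges. -/
noncomputable def numColors {V : Type*} (col : V → V → ℕ) : ℕ :=
  {a | ∃ u v : V, u ≠ v ∧ col u v = a}.ncard

/-- A properly edge-colored (PC) cycle of length `m`, given by an injective
map `c : ZMod m → V`; adjacent edges get distinct colors. -/
def IsPCCycle {V : Type*} (col : V → V → ℕ) (m : ℕ) (c : ZMod m → V) : Prop :=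
  3 ≤ m ∧ Function.Injective c ∧
    ∀ i : ZMod m, col (c i) (c (i + 1)) ≠ col (c (i + 1)) (c (i + 2))

/-- `k` pairwise vertex-disjoint PC cycles. -/
def HasKDisjointPCCycles {V : Type*} (col : V → V → ℕ) (k : ℕ) : Prop :=
  ∃ (m : Fin k → ℕ) (c : ∀ j, ZMod (m j) → V),
    (∀ j, IsPCCycle col (m j) (c j)) ∧
    ∀ j j', j ≠ j' → Disjoint (Set.range (c j)) (Set.range (c j'))

/-- `k` pairwise vertex-disjoint PC cycles, each of length at most 4. -/
def HasKDisjointShortPCCycles {V : Type*} (col : V → V → ℕ) (k : ℕ) : Prop :=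
  ∃ (m : Fin k → ℕ) (c : ∀ j, ZMod (m j) → V),
    (∀ j, IsPCCycle col (m j) (c j) ∧ m j ≤ 4) ∧
    ∀ j j', j ≠ j' → Disjoint (Set.range (c j)) (Set.range (c j'))

/-- A directed cycle of length `m` in a digraph with arc relation `A`. -/
def IsDicycle {V : Type*} (A : V → V → Prop) (m : ℕ) (c : ZMod m → V) : Prop :=
  2 ≤ m ∧ Function.Injective c ∧ ∀ i : ZMod m, A (c i) (c (i + 1))

/-- `k` pairwise vertex-disjoint directed cycles. -/
def HasKDisjointDicycles {V : Type*} (A : V → V → Prop) (k : ℕ) : Prop :=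
  ∃ (m : Fin k → ℕ) (c : ∀ j, ZMod (m j) → V),
    (∀ j, IsDicycle A (m j) (c j)) ∧
    ∀ j j', j ≠ j' → Disjoint (Set.range (c j)) (Set.range (c j'))

/-- A monochromatic edge-cut: a bipartition with all crossing edges one color. -/
def HasMonochromaticCut {V : Type*} (col : V → V → ℕ) : Prop :=
  ∃ S : Set V, S.Nonempty ∧ Sᶜ.Nonempty ∧ ∃ a, ∀ x ∈ S, ∀ y ∈ Sᶜ, col x y = a

/-- A rainbow triangle: three vertices with pairwise distinct edge colors. -/
def HasRainbowTriangle {V : Type*} (col : V → V → ℕ) : Prop :=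
  ∃ x y z : V, x ≠ y ∧ y ≠ z ∧ x ≠ z ∧
    col x y ≠ col y z ∧ col y z ≠ col x z ∧ col x y ≠ col x z

/-- A Gallai partition of an edge-colored complete graph. -/
def HasGallaiPartition {V : Type*} (col : V → V → ℕ) : Prop :=
  ∃ (q : ℕ) (U : Fin q → Set V), 2 ≤ q ∧ (∀ i, (U i).Nonempty) ∧
    (∀ i j, i ≠ j → Disjoint (U i) (U j)) ∧ (⋃ i, U i) = Set.univ ∧
    (∀ i j, i ≠ j → ∃ a, ∀ x ∈ U i, ∀ y ∈ U j, col x y = a) ∧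
    ∃ a b, ∀ i j, i ≠ j → ∀ x ∈ U i, ∀ y ∈ U j, col x y = a ∨ col x y = b


open List Finset

set_option linter.unusedSectionVars false
set_option maxHeartbeats 1000000

section Digraph
variable {V : Type*} [Fintype V] [DecidableEq V]
variable (A : V → V → Prop) (p : V → ℕ)

open Classical in
/-- A short directed cycle, given as a list of 3 or 4 distinct vertices. -/
def ShortCyc (c : List V) : Prop :=
  (c.length = 3 ∨ c.length = 4) ∧ c.Nodup ∧ List.IsChain A (c ++ c.take 1)

/-- A family of `k` pairwise disjoint short dicycles inside `s`. -/
def FamN (s : Finset V) (k : ℕ) : Prop :=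
  ∃ L : List (List V), L.length = k ∧ (∀ c ∈ L, ShortCyc A c ∧ ∀ x ∈ c, x ∈ s) ∧
    L.Pairwise (fun c c' => ∀ x ∈ c, x ∉ c')

end Digraph

section Digraph2
variable {V : Type*} [Fintype V] [DecidableEq V]
variable {A : V → V → Prop} {p : V → ℕ}

lemma shortcyc3 {a b c : V} (h1 : A a b) (h2 : A b c) (h3 : A c a)
    (n1 : a ≠ b) (n2 : b ≠ c) (n3 : a ≠ c) : ShortCyc A [a, b, c] := by
  refine ⟨Or.inl rfl, by simp [n1, n2, n3], ?_⟩
  simp [List.isChain_cons_cons, h1, h2, h3]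


lemma shortcyc4 {a b c d : V} (h1 : A a b) (h2 : A b c) (h3 : A c d) (h4 : A d a)
    (nd : List.Nodup [a, b, c, d]) : ShortCyc A [a, b, c, d] := by
  refine ⟨Or.inr rfl, nd, ?_⟩
  simp [List.isChain_cons_cons, h1, h2, h3, h4]



lemma arc_ne (hpart : ∀ u w, A u w → p u ≠ p w) {u w : V} (h : A u w) : u ≠ w :=
  fun hEq => hpart u w h (by rw [hEq])

lemma shortcyc3' (hpart : ∀ u w, A u w → p u ≠ p w) {a b c : V}
    (h1 : A a b) (h2 : A b c) (h3 : A c a) : ShortCyc A [a, b, c] :=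
  shortcyc3 h1 h2 h3 (arc_ne hpart h1) (arc_ne hpart h2) (Ne.symm (arc_ne hpart h3))

open Classical in
noncomputable def inDeg (s : Finset V) (x : V) : ℕ := (s.filter (fun y => A y x)).card


/-- In a finite digraph where every vertex of `s` has an in-neighbour in `s`,
there is a (list) cycle inside `s`. -/
lemma exists_cycle_list
    (hanti : ∀ u w, A u w → ¬ A w u) (hirr : ∀ u, ¬ A u u)
    {s : Finset V} (hne : s.Nonempty) (hin : ∀ x ∈ s, ∃ y ∈ s, A y x) :
    ∃ l : List V, 3 ≤ l.length ∧ l.Nodup ∧ (∀ x ∈ l, x ∈ s) ∧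
      List.IsChain A (l ++ l.take 1) := by
  classical
  obtain ⟨x0, hx0⟩ := hne
  -- F x : an in-neighbour of x in s
  have hch : ∀ x : V, ∃ y : V, x ∈ s → y ∈ s ∧ A y x := by
    intro x
    by_cases hx : x ∈ s
    · obtain ⟨y, hy, hA⟩ := hin x hx
      exact ⟨y, fun _ => ⟨hy, hA⟩⟩
    · exact ⟨x0, fun h => absurd h hx⟩
  choose F hF using hch
  set f : ℕ → V := fun i => F^[i] x0 with hf
  have hfs : ∀ i, f i ∈ s := by
    intro i
    induction i with
    | zero => simpa [hf] using hx0
    | succ j ih =>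
        have : f (j+1) = F (f j) := by
          simp [hf, Function.iterate_succ_apply']
        rw [this]
        exact (hF (f j) ih).1
  have hfa : ∀ i, A (f (i+1)) (f i) := by
    intro i
    have : f (i+1) = F (f i) := by simp [hf, Function.iterate_succ_apply']
    rw [this]
    exact (hF (f i) (hfs i)).2
  -- pigeonhole: some repeat
  have hrep : ∃ d, 0 < d ∧ ∃ i, f (i + d) = f i := by
    have hcard : (Finset.range (Fintype.card V + 1)).card > (Finset.univ : Finset V).card := by
      simp
    obtain ⟨i, _, j, _, hij, heq⟩ :=
      Finset.exists_ne_map_eq_of_card_lt_of_maps_to hcard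
        (fun i _ => Finset.mem_univ (f i))
    rcases lt_or_gt_of_ne hij with h | h
    · exact ⟨j - i, by omega, i, by rw [show i + (j - i) = j by omega]; exact heq.symm⟩
    · exact ⟨i - j, by omega, j, by rw [show j + (i - j) = i by omega]; exact heq⟩
  classical
  let d := Nat.find hrep
  obtain ⟨hd0, i0, hi0⟩ : 0 < d ∧ ∃ i, f (i + d) = f i := Nat.find_spec hrep
  have hdmin : ∀ d', 0 < d' → d' < d → ∀ i, f (i + d') ≠ f i := by
    intro d' h1 h2 i hEq
    exact Nat.find_min hrep h2 ⟨h1, i, hEq⟩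
  -- d ≥ 3
  have hd3 : 3 ≤ d := by
    rcases Nat.lt_or_ge d 3 with h | h
    · interval_cases d
      · exact absurd (hfa i0) (by rw [hi0]; exact hirr _)
      · have h1 : A (f (i0 + 2)) (f (i0 + 1)) := hfa (i0 + 1)
        have h2 : A (f (i0 + 1)) (f i0) := hfa i0
        rw [show i0 + 2 = i0 + 2 from rfl, hi0] at h1
        exact absurd h2 (hanti _ _ h1)
    · exact h
  -- the cycle list: [f (i0+d), f (i0+d-1), ..., f (i0+1)]
  refine ⟨(List.range d).map (fun t => f (i0 + d - t)), by simpa, ?_, ?_, ?_⟩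
  · rw [List.nodup_map_iff_inj_on List.nodup_range]
    intro t1 ht1 t2 ht2 hEq
    simp only [List.mem_range] at ht1 ht2
    by_contra hne
    rcases Nat.lt_or_ge t1 t2 with h | h
    · exact hdmin (t2 - t1) (by omega) (by omega) (i0 + d - t2)
        (by rw [show i0 + d - t2 + (t2 - t1) = i0 + d - t1 by omega]; exact hEq)
    · have h' : t2 < t1 := by omega
      exact hdmin (t1 - t2) (by omega) (by omega) (i0 + d - t1)
        (by rw [show i0 + d - t1 + (t1 - t2) = i0 + d - t2 by omega]; exact hEq.symm)
  · intro x hx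
    simp only [List.mem_map, List.mem_range] at hx
    obtain ⟨t, _, rfl⟩ := hx
    exact hfs _
  · -- chain
    have htake : ((List.range d).map (fun t => f (i0 + d - t))).take 1
        = [f (i0 + d)] := by
      rw [show d = (d-1)+1 by omega, List.range_succ_eq_map]
      simp
    rw [htake]
    have hmain : ((List.range d).map (fun t => f (i0 + d - t))) ++ [f (i0 + d)]
        = ((List.range d ++ [0]).map (fun t => f (i0 + d - t))) := by
      simp
    rw [hmain, List.isChain_map]
    rw [List.isChain_append]
    refine ⟨?_, by simp, ?_⟩
    · rw [show d = (d-1) + 1 by omega, List.isChain_range_succ]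
      intro m hm
      have : i0 + ((d-1)+1) - (m+1) + 1 = i0 + ((d-1)+1) - m := by omega
      rw [← this]
      exact hfa _
    · intro x hx y hy
      rw [show (List.range d) = List.range ((d-1)+1) by congr 1; omega,
        List.range_succ, List.getLast?_concat] at hx
      simp only [Option.mem_def, Option.some.injEq] at hx
      simp only [List.head?_cons, Option.mem_def, Option.some.injEq] at hy
      subst hx; subst hy
      have h1 : i0 + d - (d-1) = i0 + 1 := by omega
      rw [h1]
      have := hfa i0
      rw [← hi0] at this
      simpa using this

/-- Any list cycle in a multipartite tournament contains a short (3 or 4) cycle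
on a subset of its vertices. -/
lemma shorten_cycle
    (hanti : ∀ u w, A u w → ¬ A w u) (hpart : ∀ u w, A u w → p u ≠ p w)
    {s : Finset V} (htot : ∀ u ∈ s, ∀ w ∈ s, p u ≠ p w → A u w ∨ A w u) :
    ∀ (N : ℕ) (l : List V), l.length ≤ N → 3 ≤ l.length → l.Nodup →
      (∀ x ∈ l, x ∈ s) → List.IsChain A (l ++ l.take 1) →
      ∃ c, ShortCyc A c ∧ ∀ x ∈ c, x ∈ l := by
  intro N
  induction N with
  | zero => intro l h1 h2; omega
  | succ N ih =>
    intro l hlen h3 hnd hmem hch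
    match l, h3 with
    | [a, b, c], _ =>
      simp only [List.cons_append, List.nil_append, List.take] at hch
      simp only [List.isChain_cons_cons, List.isChain_singleton, and_true] at hch
      obtain ⟨h1, h2, h3'⟩ := hch
      exact ⟨[a,b,c], shortcyc3' hpart h1 h2 h3', by intro x hx; exact hx⟩
    | [a, b, c, d], _ =>
      simp only [List.cons_append, List.nil_append, List.take] at hch
      simp only [List.isChain_cons_cons, List.isChain_singleton, and_true] at hch
      obtain ⟨h1, h2, h3', h4⟩ := hch
      exact ⟨[a,b,c,d], shortcyc4 h1 h2 h3' h4 hnd, by intro x hx; exact hx⟩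
    | a :: b :: c :: d :: e :: rest, _ =>
      -- extract arcs
      have hch' := hch
      simp only [List.cons_append, List.take] at hch'
      rw [List.isChain_cons_cons] at hch'
      obtain ⟨hab, hch'⟩ := hch'
      rw [List.isChain_cons_cons] at hch'
      obtain ⟨hbc, hch'⟩ := hch'
      rw [List.isChain_cons_cons] at hch'
      obtain ⟨hcd, hch'⟩ := hch'
      -- hch' : Chain' A (d :: e :: rest ++ [a])
      have has : a ∈ s := hmem a (by simp)
      have hbs : b ∈ s := hmem b (by simp)
      have hcs : c ∈ s := hmem c (by simp)
      have hds : d ∈ s := hmem d (by simp)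
      have hsub1 : (d :: e :: rest).Sublist (b :: c :: d :: e :: rest) :=
        ((List.sublist_cons_self c _).trans (List.sublist_cons_self b _))
      by_cases hac : p a = p c
      · by_cases hbd : p b = p d
        · -- a and d are in different parts
          have had : p a ≠ p d := by
            have := hpart _ _ hcd; rw [← hac] at this; exact this
          rcases htot a has d hds had with h | h
          · -- drop b, c
            have hnd' : (a :: d :: e :: rest).Nodup := by
              have : (a :: d :: e :: rest).Sublist (a :: b :: c :: d :: e :: rest) :=
                List.Sublist.cons₂ a hsub1
              exact hnd.sublist this
            have hch2 : List.IsChain A ((a :: d :: e :: rest) ++ [a]) := by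
              simp only [List.cons_append]
              rw [List.isChain_cons_cons]
              exact ⟨h, by simpa using hch'⟩
            obtain ⟨cc, hcc1, hcc2⟩ := ih (a :: d :: e :: rest) (by simp at hlen ⊢; omega)
              (by simp) hnd' (fun x hx => hmem x (by
                simp only [List.mem_cons] at hx ⊢; tauto)) (by simpa using hch2)
            exact ⟨cc, hcc1, fun x hx => by
              have := hcc2 x hx; simp only [List.mem_cons] at this ⊢; tauto⟩
          · -- short cycle [a,b,c,d]
            refine ⟨[a,b,c,d], shortcyc4 hab hbc hcd h ?_, by
              intro x hx; simp only [List.mem_cons] at hx ⊢; tauto⟩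
            have : ([a,b,c,d] : List V).Sublist (a :: b :: c :: d :: e :: rest) := by
              refine List.Sublist.cons₂ a (List.Sublist.cons₂ b (List.Sublist.cons₂ c
                (List.Sublist.cons₂ d ?_)))
              exact List.nil_sublist _
            exact hnd.sublist this
        · rcases htot b hbs d hds hbd with h | h
          · -- drop c
            have hnd' : (a :: b :: d :: e :: rest).Nodup := by
              have : (a :: b :: d :: e :: rest).Sublist (a :: b :: c :: d :: e :: rest) :=
                List.Sublist.cons₂ a (List.Sublist.cons₂ b (List.sublist_cons_self c _))
              exact hnd.sublist this
            have hch2 : List.IsChain A ((a :: b :: d :: e :: rest) ++ [a]) := by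
              simp only [List.cons_append]
              rw [List.isChain_cons_cons, List.isChain_cons_cons]
              exact ⟨hab, h, by simpa using hch'⟩
            obtain ⟨cc, hcc1, hcc2⟩ := ih (a :: b :: d :: e :: rest) (by simp at hlen ⊢; omega)
              (by simp) hnd' (fun x hx => hmem x (by
                simp only [List.mem_cons] at hx ⊢; tauto)) (by simpa using hch2)
            exact ⟨cc, hcc1, fun x hx => by
              have := hcc2 x hx; simp only [List.mem_cons] at this ⊢; tauto⟩
          · -- triangle b c d
            refine ⟨[b,c,d], shortcyc3' hpart hbc hcd h, by
              intro x hx; simp only [List.mem_cons] at hx ⊢; tauto⟩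
      · rcases htot a has c hcs hac with h | h
        · -- drop b
          have hnd' : (a :: c :: d :: e :: rest).Nodup := by
            have : (a :: c :: d :: e :: rest).Sublist (a :: b :: c :: d :: e :: rest) :=
              List.Sublist.cons₂ a (List.sublist_cons_self b _)
            exact hnd.sublist this
          have hch2 : List.IsChain A ((a :: c :: d :: e :: rest) ++ [a]) := by
            simp only [List.cons_append]
            rw [List.isChain_cons_cons, List.isChain_cons_cons]
            exact ⟨h, hcd, by simpa using hch'⟩
          obtain ⟨cc, hcc1, hcc2⟩ := ih (a :: c :: d :: e :: rest) (by simp at hlen ⊢; omega)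
            (by simp) hnd' (fun x hx => hmem x (by
              simp only [List.mem_cons] at hx ⊢; tauto)) (by simpa using hch2)
          exact ⟨cc, hcc1, fun x hx => by
            have := hcc2 x hx; simp only [List.mem_cons] at this ⊢; tauto⟩
        · -- triangle a b c
          refine ⟨[a,b,c], shortcyc3' hpart hab hbc h, by
            intro x hx; simp only [List.mem_cons] at hx ⊢; tauto⟩

lemma shortcyc_extract3 {c : List V} (h : ShortCyc A c) (h3 : c.length = 3) :
    ∃ a b d, c = [a, b, d] ∧ A a b ∧ A b d ∧ A d a := by
  obtain ⟨-, hnd, hch⟩ := h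
  match c, h3 with
  | [a, b, d], _ =>
    simp only [List.cons_append, List.nil_append, List.take] at hch
    simp only [List.isChain_cons_cons, List.isChain_singleton, and_true] at hch
    exact ⟨a, b, d, rfl, hch.1, hch.2.1, hch.2.2⟩

lemma shortcyc_extract4 {c : List V} (h : ShortCyc A c) (h4 : c.length = 4) :
    ∃ a b d e, c = [a, b, d, e] ∧ A a b ∧ A b d ∧ A d e ∧ A e a ∧ a ≠ d ∧ b ≠ e := by
  obtain ⟨-, hnd, hch⟩ := h
  match c, h4 with
  | [a, b, d, e], _ =>
    simp only [List.cons_append, List.nil_append, List.take] at hch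
    simp only [List.isChain_cons_cons, List.isChain_singleton, and_true] at hch
    simp only [List.nodup_cons, List.mem_cons, List.not_mem_nil, or_false,
      List.mem_singleton, not_or, List.nodup_nil] at hnd
    exact ⟨a, b, d, e, rfl, hch.1, hch.2.1, hch.2.2.1, hch.2.2.2, hnd.1.2.1, hnd.2.1.2⟩

open Classical in
lemma inDeg_pos_iff {s : Finset V} {x : V} : 0 < inDeg (A := A) s x ↔ ∃ y ∈ s, A y x := by
  rw [inDeg, Finset.card_pos]
  constructor
  · rintro ⟨y, hy⟩
    rw [Finset.mem_filter] at hy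
    exact ⟨y, hy.1, hy.2⟩
  · rintro ⟨y, hy, hA⟩
    exact ⟨y, Finset.mem_filter.2 ⟨hy, hA⟩⟩

open Classical in
lemma inDeg_sdiff_le {s t u : Finset V} {x : V} (h : ∀ y ∈ t, A y x → y ∈ u) :
    inDeg (A := A) s x ≤ inDeg (A := A) (s \ t) x + u.card := by
  have hsub : s.filter (fun y => A y x) ⊆ ((s \ t).filter (fun y => A y x)) ∪ u := by
    intro y hy
    rw [Finset.mem_filter] at hy
    by_cases hyt : y ∈ t
    · exact Finset.mem_union_right _ (h y hyt hy.2)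
    · exact Finset.mem_union_left _ (Finset.mem_filter.2 ⟨Finset.mem_sdiff.2 ⟨hy.1, hyt⟩, hy.2⟩)
  calc inDeg (A := A) s x ≤ (((s \ t).filter (fun y => A y x)) ∪ u).card :=
        Finset.card_le_card hsub
    _ ≤ _ := Finset.card_union_le _ _

open Classical in
lemma exists_inDeg_outside {s t : Finset V} {x : V} {m : ℕ}
    (hdeg : m ≤ inDeg (A := A) s x) (hcard : t.card < m) :
    ∃ y ∈ s, A y x ∧ y ∉ t := by
  by_contra hcon
  push_neg at hcon
  have hsub : s.filter (fun y => A y x) ⊆ t := by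
    intro y hy
    rw [Finset.mem_filter] at hy
    exact hcon y hy.1 hy.2
  have := Finset.card_le_card hsub
  rw [inDeg] at hdeg
  omega

lemma famN_cons {s : Finset V} {c : List V} {k : ℕ} (hc : ShortCyc A c)
    (hcs : ∀ x ∈ c, x ∈ s) (hF : FamN A (s \ c.toFinset) k) : FamN A s (k + 1) := by
  obtain ⟨L, hL1, hL2, hL3⟩ := hF
  refine ⟨c :: L, by simp [hL1], ?_, ?_⟩
  · intro c2 hmem
    rcases List.mem_cons.1 hmem with rfl | hc2
    · exact ⟨hc, hcs⟩
    · obtain ⟨h1, h2⟩ := hL2 c2 hc2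
      exact ⟨h1, fun x hx => (Finset.mem_sdiff.1 (h2 x hx)).1⟩
  · rw [List.pairwise_cons]
    refine ⟨?_, hL3⟩
    intro c2 hc2 x hx hx2
    have := (hL2 c2 hc2).2 x hx2
    rw [Finset.mem_sdiff] at this
    exact this.2 (List.mem_toFinset.2 hx)

/-- existence of one short cycle -/
lemma exists_shortcyc (hanti : ∀ u w, A u w → ¬ A w u) (hpart : ∀ u w, A u w → p u ≠ p w)
    {s : Finset V} (htot : ∀ u ∈ s, ∀ w ∈ s, p u ≠ p w → A u w ∨ A w u)
    (hne : s.Nonempty) (hin : ∀ x ∈ s, 1 ≤ inDeg (A := A) s x) :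
    ∃ c, ShortCyc A c ∧ ∀ x ∈ c, x ∈ s := by
  have hin2 : ∀ x ∈ s, ∃ y ∈ s, A y x := fun x hx => inDeg_pos_iff.1 (hin x hx)
  have hirr : ∀ u, ¬ A u u := fun u h => hpart u u h rfl
  obtain ⟨l, hl3, hlnd, hls, hlch⟩ := exists_cycle_list hanti hirr hne hin2
  obtain ⟨c, hc1, hc2⟩ := shorten_cycle hanti hpart htot l.length l le_rfl hl3 hlnd hls hlch
  exact ⟨c, hc1, fun x hx => hls x (hc2 x hx)⟩

/-- Bipartite case: in-degrees `≥ 2k+1` give `k+1` disjoint short cycles. -/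
lemma bip_fam (hanti : ∀ u w, A u w → ¬ A w u) (hpart : ∀ u w, A u w → p u ≠ p w) :
    ∀ (k : ℕ) (s : Finset V) (pa pb : ℕ),
      (∀ u ∈ s, ∀ w ∈ s, p u ≠ p w → A u w ∨ A w u) →
      (∀ x ∈ s, p x = pa ∨ p x = pb) →
      (∀ x ∈ s, 2 * k + 1 ≤ inDeg (A := A) s x) → s.Nonempty →
      FamN A s (k + 1) := by
  intro k
  induction k with
  | zero =>
    intro s pa pb htot hbip hin hne
    obtain ⟨c, hc1, hc2⟩ := exists_shortcyc hanti hpart htot hne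
      (fun x hx => by have := hin x hx; omega)
    refine ⟨[c], rfl, ?_, by simp⟩
    intro c2 hmem
    rcases List.mem_cons.1 hmem with rfl | h
    · exact ⟨hc1, hc2⟩
    · simp at h
  | succ k ih =>
    intro s pa pb htot hbip hin hne
    obtain ⟨c, hc1, hc2⟩ := exists_shortcyc hanti hpart htot hne
      (fun x hx => by have := hin x hx; omega)
    rcases hc1.1 with h3 | h4
    · -- triangle: impossible in bipartite
      obtain ⟨a, b, d, rfl, hab, hbd, hda⟩ := shortcyc_extract3 hc1 h3
      have h1 := hpart _ _ hab
      have h2 := hpart _ _ hbd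
      have h3x := hpart _ _ hda
      have ha := hbip a (hc2 a (by simp))
      have hb := hbip b (hc2 b (by simp))
      have hd := hbip d (hc2 d (by simp))
      rcases ha with ha | ha <;> rcases hb with hb | hb <;> rcases hd with hd | hd <;>
        omega
    · obtain ⟨a, b, d, e, rfl, hab, hbd, hde, hea, had, hbe⟩ := shortcyc_extract4 hc1 h4
      have has : a ∈ s := hc2 a (by simp)
      have hbs : b ∈ s := hc2 b (by simp)
      have hds : d ∈ s := hc2 d (by simp)
      have hes : e ∈ s := hc2 e (by simp)
      have hpab := hpart _ _ hab
      have hpbd := hpart _ _ hbd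
      have hpde := hpart _ _ hde
      have hpea := hpart _ _ hea
      have hpda : p d = p a := by
        rcases hbip a has with h | h <;> rcases hbip b hbs with h2 | h2 <;>
          rcases hbip d hds with h3x | h3x <;> omega
      have hpeb : p e = p b := by
        rcases hbip a has with h | h <;> rcases hbip b hbs with h2 | h2 <;>
          rcases hbip e hes with h4x | h4x <;> omega
      set s2 := s \ ([a,b,d,e] : List V).toFinset with hs2
      have hs2sub : s2 ⊆ s := Finset.sdiff_subset
      have hin2 : ∀ x ∈ s2, 2 * k + 1 ≤ inDeg (A := A) s2 x := by
        intro x hx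
        have hxs := hs2sub hx
        have hux : ∀ y ∈ ([a,b,d,e] : List V).toFinset, A y x →
            y ∈ (if p x = p a then ({b, e} : Finset V) else {a, d}) := by
          intro y hy hA
          have hpyx := hpart _ _ hA
          simp only [List.toFinset_cons, List.toFinset_nil, LawfulSingleton.insert_empty_eq,
            Finset.mem_insert, Finset.mem_singleton] at hy
          by_cases hxa : p x = p a
          · rw [if_pos hxa]
            rcases hy with rfl | rfl | rfl | rfl
            · exact absurd hxa.symm hpyx
            · simp
            · exact absurd (hpda.trans hxa.symm) hpyx
            · simp
          · rw [if_neg hxa]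
            have hxb : p x = p b := by
              rcases hbip x hxs with h | h <;> rcases hbip a has with h2 | h2 <;>
                rcases hbip b hbs with h3x | h3x <;> omega
            rcases hy with rfl | rfl | rfl | rfl
            · simp
            · exact absurd hxb.symm hpyx
            · simp
            · exact absurd (hpeb.trans hxb.symm) hpyx
        have hcard2 : (if p x = p a then ({b, e} : Finset V) else {a, d}).card ≤ 2 := by
          split <;> exact (Finset.card_insert_le _ _).trans (by simp)
        have hle := inDeg_sdiff_le (s := s) (x := x) hux
        rw [← hs2] at hle
        have h0 := hin x hxs
        omega
      have hne2 : s2.Nonempty := by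
        obtain ⟨y, hy, hAy, hyt⟩ := exists_inDeg_outside (t := ({e} : Finset V))
          (hdeg := hin a has) (hcard := by simp)
        refine ⟨y, Finset.mem_sdiff.2 ⟨hy, ?_⟩⟩
        simp only [Finset.mem_singleton] at hyt
        have hya : y ≠ a := arc_ne hpart hAy
        have hyb : y ≠ b := fun hEq => hanti _ _ hab (hEq ▸ hAy)
        have hyd : y ≠ d := fun hEq => hpart _ _ (hEq ▸ hAy) (hpda.symm ▸ rfl)
        simp [hya, hyb, hyd, hyt]
      have hF := ih s2 pa pb (fun u hu w hw => htot u (hs2sub hu) w (hs2sub hw))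
        (fun x hx => hbip x (hs2sub hx)) hin2 hne2
      exact famN_cons hc1 hc2 hF

/-- Reachability within a set. -/
def ReachIn (A : V → V → Prop) (s : Finset V) : V → V → Prop :=
  Relation.ReflTransGen (fun x y => x ∈ s ∧ y ∈ s ∧ A x y)

lemma reachIn_swap {s : Finset V} {a b : V} (h : ReachIn A s a b) :
    ReachIn (fun u w => A w u) s b a := by
  induction h with
  | refl => exact Relation.ReflTransGen.refl
  | tail hstep hlast ih =>
      exact Relation.ReflTransGen.head ⟨hlast.2.1, hlast.1, hlast.2.2⟩ ih

/-- A source strong component. -/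
lemma source_component {s : Finset V} (hne : s.Nonempty) :
    ∃ S : Finset V, S ⊆ s ∧ S.Nonempty ∧ (∀ y ∈ S, ∀ z ∈ s, A z y → z ∈ S) ∧
      (∀ y ∈ S, ∀ y' ∈ S, ReachIn A s y y') := by
  classical
  obtain ⟨x0, hx0s, hx0min⟩ := Finset.exists_min_image s
    (fun x => (s.filter (fun y => ReachIn A s y x)).card) hne
  set T : V → Finset V := fun x => s.filter (fun y => ReachIn A s y x) with hT
  refine ⟨T x0, Finset.filter_subset _ _, ⟨x0, ?_⟩, ?_, ?_⟩
  · exact Finset.mem_filter.2 ⟨hx0s, Relation.ReflTransGen.refl⟩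
  · intro y hy z hz hA
    rw [Finset.mem_filter] at hy ⊢
    exact ⟨hz, Relation.ReflTransGen.head ⟨hz, hy.1, hA⟩ hy.2⟩
  · intro y hy y' hy'
    rw [Finset.mem_filter] at hy hy'
    -- T y = T x0
    have hsub : T y ⊆ T x0 := by
      intro w hw
      rw [Finset.mem_filter] at hw ⊢
      exact ⟨hw.1, hw.2.trans hy.2⟩
    have hcard : (T x0).card ≤ (T y).card := hx0min y hy.1
    have hEq : T y = T x0 := Finset.eq_of_subset_of_card_le hsub hcard
    have hx0Ty : x0 ∈ T y := by
      rw [hEq]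
      exact Finset.mem_filter.2 ⟨hx0s, Relation.ReflTransGen.refl⟩
    have hx0y : ReachIn A s x0 y := (Finset.mem_filter.1 hx0Ty).2
    -- similarly x0 reaches y'
    have hsub' : T y' ⊆ T x0 := by
      intro w hw
      rw [Finset.mem_filter] at hw ⊢
      exact ⟨hw.1, hw.2.trans hy'.2⟩
    have hEq' : T y' = T x0 := Finset.eq_of_subset_of_card_le hsub' (hx0min y' hy'.1)
    have hx0y' : ReachIn A s x0 y' := by
      have : x0 ∈ T y' := by
        rw [hEq']
        exact Finset.mem_filter.2 ⟨hx0s, Relation.ReflTransGen.refl⟩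
      exact (Finset.mem_filter.1 this).2
    exact hy.2.trans hx0y'

/-- The four-cycle domination dichotomy. -/
lemma dicho (hpart : ∀ u w, A u w → p u ≠ p w)
    {s : Finset V} (htot : ∀ u ∈ s, ∀ w ∈ s, p u ≠ p w → A u w ∨ A w u)
    (hnc3 : ∀ a ∈ s, ∀ b ∈ s, ∀ c ∈ s, ¬(A a b ∧ A b c ∧ A c a))
    {x1 x2 x3 x4 : V} (hx1 : x1 ∈ s) (hx2 : x2 ∈ s) (hx3 : x3 ∈ s) (hx4 : x4 ∈ s)
    (a12 : A x1 x2) (a23 : A x2 x3) (a34 : A x3 x4) (a41 : A x4 x1)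
    (hp13 : p x1 = p x3) (hp24 : p x2 = p x4)
    {u : V} (hu : u ∈ s) (hup1 : p u ≠ p x1) (hup2 : p u ≠ p x2) :
    (A u x1 ∧ A u x2 ∧ A u x3 ∧ A u x4) ∨ (A x1 u ∧ A x2 u ∧ A x3 u ∧ A x4 u) := by
  have hup3 : p u ≠ p x3 := hp13 ▸ hup1
  have hup4 : p u ≠ p x4 := hp24 ▸ hup2
  have step : ∀ y z : V, y ∈ s → z ∈ s → A y z → p u ≠ p z → A u y → A u z := by
    intro y z hys hzs hyz hupz huy
    by_contra hcon
    rcases htot u hu z hzs hupz with h | h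
    · exact hcon h
    · exact hnc3 u hu y hys z hzs ⟨huy, hyz, h⟩
  by_cases h1 : A u x1
  · have h2 : A u x2 := step x1 x2 hx1 hx2 a12 hup2 h1
    have h3 : A u x3 := step x2 x3 hx2 hx3 a23 hup3 h2
    have h4 : A u x4 := step x3 x4 hx3 hx4 a34 hup4 h3
    exact Or.inl ⟨h1, h2, h3, h4⟩
  · have h4 : ¬ A u x4 := fun h => h1 (step x4 x1 hx4 hx1 a41 hup1 h)
    have h3 : ¬ A u x3 := fun h => h4 (step x3 x4 hx3 hx4 a34 hup4 h)
    have h2 : ¬ A u x2 := fun h => h3 (step x2 x3 hx2 hx3 a23 hup3 h)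
    refine Or.inr ⟨?_, ?_, ?_, ?_⟩
    · rcases htot u hu x1 hx1 hup1 with h | h
      exacts [absurd h h1, h]
    · rcases htot u hu x2 hx2 hup2 with h | h
      exacts [absurd h h2, h]
    · rcases htot u hu x3 hx3 hup3 with h | h
      exacts [absurd h h3, h]
    · rcases htot u hu x4 hx4 hup4 with h | h
      exacts [absurd h h4, h]

/-- Core of the "no C3 implies a strong component spans at most two parts" lemma. -/
lemma lemB_aux (hanti : ∀ u w, A u w → ¬ A w u) (hpart : ∀ u w, A u w → p u ≠ p w)
    {s : Finset V} (htot : ∀ u ∈ s, ∀ w ∈ s, p u ≠ p w → A u w ∨ A w u)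
    (hnc3 : ∀ a ∈ s, ∀ b ∈ s, ∀ c ∈ s, ¬(A a b ∧ A b c ∧ A c a))
    {x1 x2 x3 x4 z : V} (hx1 : x1 ∈ s) (hx2 : x2 ∈ s) (hx3 : x3 ∈ s) (hx4 : x4 ∈ s)
    (hz : z ∈ s)
    (a12 : A x1 x2) (a23 : A x2 x3) (a34 : A x3 x4) (a41 : A x4 x1)
    (hp13 : p x1 = p x3) (hp24 : p x2 = p x4)
    (hzp1 : p z ≠ p x1) (hzp2 : p z ≠ p x2)
    (hdom : A z x1 ∧ A z x2 ∧ A z x3 ∧ A z x4)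
    (hreach : ReachIn A s x1 z) : False := by
  set Zp : V → Prop := fun y => y ∈ s ∧ p y ≠ p x1 ∧ p y ≠ p x2 ∧
    A y x1 ∧ A y x2 ∧ A y x3 ∧ A y x4 with hZp
  set AA : V → Prop := fun w => w ∈ s ∧ (Zp w ∨ ∃ y, Zp y ∧ A w y) with hAA
  have hp12 : p x1 ≠ p x2 := hpart _ _ a12
  -- x1 not in AA
  have hx1nA : ¬ AA x1 := by
    rintro ⟨-, hZ | ⟨y, hy, hAy⟩⟩
    · exact hZ.2.1 rfl
    · exact hanti _ _ hy.2.2.2.1 hAy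
  -- z in AA
  have hzA : AA z := ⟨hz, Or.inl ⟨hz, hzp1, hzp2, hdom.1, hdom.2.1, hdom.2.2.1, hdom.2.2.2⟩⟩
  -- closure under predecessors
  have hclose : ∀ u ∈ s, ∀ w, AA w → A u w → AA u := by
    intro u hu w hw hA
    obtain ⟨hws, hZw | ⟨y, hy, hAwy⟩⟩ := hw
    · exact ⟨hu, Or.inr ⟨w, hZw, hA⟩⟩
    · by_contra hcon
      have hnZu : ¬ Zp u := fun h => hcon ⟨hu, Or.inl h⟩
      have hnEx : ∀ y2, Zp y2 → ¬ A u y2 := fun y2 hy2 hA2 => hcon ⟨hu, Or.inr ⟨y2, hy2, hA2⟩⟩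
      have hys : y ∈ s := hy.1
      by_cases hpuy : p u = p y
      · -- u has the same (third) part as y
        have hup1 : p u ≠ p x1 := hpuy ▸ hy.2.1
        have hup2 : p u ≠ p x2 := hpuy ▸ hy.2.2.1
        rcases dicho hpart htot hnc3 hx1 hx2 hx3 hx4 a12 a23 a34 a41 hp13 hp24
            hu hup1 hup2 with hZu | hZm
        · exact hnZu ⟨hu, hup1, hup2, hZu.1, hZu.2.1, hZu.2.2.1, hZu.2.2.2⟩
        · -- u is dominated by the cycle
          by_cases hpw1 : p w = p x1
          · -- A w x2, then C3 u w x2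
            have hwx2 : A w x2 := by
              have hpwx2 : p w ≠ p x2 := by rw [hpw1]; exact hp12
              rcases htot w hws x2 hx2 hpwx2 with h | h
              · exact h
              · exact absurd ⟨hAwy, hy.2.2.2.2.1, h⟩ (hnc3 w hws y hys x2 hx2)
            exact hnc3 u hu w hws x2 hx2 ⟨hA, hwx2, hZm.2.1⟩
          · by_cases hpw2 : p w = p x2
            · have hwx1 : A w x1 := by
                have hpwx1 : p w ≠ p x1 := by rw [hpw2]; exact hp12.symm
                rcases htot w hws x1 hx1 hpwx1 with h | h
                · exact h
                · exact absurd ⟨hAwy, hy.2.2.2.1, h⟩ (hnc3 w hws y hys x1 hx1)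
              exact hnc3 u hu w hws x1 hx1 ⟨hA, hwx1, hZm.1⟩
            · -- w also in a third part
              rcases dicho hpart htot hnc3 hx1 hx2 hx3 hx4 a12 a23 a34 a41 hp13 hp24
                  hws hpw1 hpw2 with hZw2 | hZm2
              · exact hnEx w ⟨hws, hpw1, hpw2, hZw2.1, hZw2.2.1, hZw2.2.2.1, hZw2.2.2.2⟩ hA
              · -- C3 w y x1
                exact hnc3 w hws y hys x1 hx1 ⟨hAwy, hy.2.2.2.1, hZm2.1⟩
      · -- u, w, y in pairwise distinct parts
        have hpuw : p u ≠ p w := hpart _ _ hA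
        rcases htot u hu y hys hpuy with h | h
        · exact hnEx y hy h
        · exact hnc3 u hu w hws y hys ⟨hA, hAwy, h⟩
  -- propagate backwards along the path
  have hback : ∀ a b : V, ReachIn A s a b → AA b → AA a := by
    intro a b hab
    induction hab with
    | refl => exact id
    | tail hstep hlast ih =>
        intro hAb
        exact ih (hclose _ hlast.1 _ hAb hlast.2.2)
  exact hx1nA (hback _ _ hreach hzA)

lemma famN_mono {s t : Finset V} {k : ℕ} (hst : s ⊆ t) (h : FamN A s k) : FamN A t k := by
  obtain ⟨L, h1, h2, h3⟩ := h
  exact ⟨L, h1, fun c hc => ⟨(h2 c hc).1, fun x hx => hst ((h2 c hc).2 x hx)⟩, h3⟩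

/-- Main multipartite tournament theorem: in-degrees `≥ 3k+1` give `k+1`
pairwise disjoint short dicycles. -/
lemma mt_fam (hanti : ∀ u w, A u w → ¬ A w u) (hpart : ∀ u w, A u w → p u ≠ p w) :
    ∀ (k : ℕ) (s : Finset V),
      (∀ u ∈ s, ∀ w ∈ s, p u ≠ p w → A u w ∨ A w u) →
      (∀ x ∈ s, 3 * k + 1 ≤ inDeg (A := A) s x) → s.Nonempty →
      FamN A s (k + 1) := by
  intro k
  induction k with
  | zero =>
    intro s htot hin hne
    obtain ⟨c, hc1, hc2⟩ := exists_shortcyc hanti hpart htot hne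
      (fun x hx => by have := hin x hx; omega)
    refine ⟨[c], rfl, ?_, by simp⟩
    intro c2 hmem
    rcases List.mem_cons.1 hmem with rfl | h
    · exact ⟨hc1, hc2⟩
    · simp at h
  | succ k ih =>
    intro s htot hin hne
    by_cases hc3 : ∃ a ∈ s, ∃ b ∈ s, ∃ c ∈ s, A a b ∧ A b c ∧ A c a
    · -- remove a directed triangle and recurse
      obtain ⟨a, has, b, hbs, d, hds, hab, hbd, hda⟩ := hc3
      set s2 := s \ ([a,b,d] : List V).toFinset with hs2
      have hs2sub : s2 ⊆ s := Finset.sdiff_subset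
      have hin2 : ∀ x ∈ s2, 3 * k + 1 ≤ inDeg (A := A) s2 x := by
        intro x hx
        have hc3' : (([a,b,d] : List V).toFinset).card ≤ 3 := List.toFinset_card_le _
        have hux : ∀ y ∈ ([a,b,d] : List V).toFinset, A y x →
            y ∈ ([a,b,d] : List V).toFinset := fun y hy _ => hy
        have hle := inDeg_sdiff_le (s := s) (x := x) hux
        rw [← hs2] at hle
        have h0 := hin x (hs2sub hx)
        omega
      have hne2 : s2.Nonempty := by
        obtain ⟨y, hy, hAy, hyt⟩ := exists_inDeg_outside (t := ({d} : Finset V))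
          (hdeg := hin a has) (hcard := by simp)
        refine ⟨y, Finset.mem_sdiff.2 ⟨hy, ?_⟩⟩
        simp only [Finset.mem_singleton] at hyt
        have hya : y ≠ a := arc_ne hpart hAy
        have hyb : y ≠ b := fun hEq => hanti _ _ hab (hEq ▸ hAy)
        simp [hya, hyb, hyt]
      have hF := ih s2 (fun u hu w hw => htot u (hs2sub hu) w (hs2sub hw)) hin2 hne2
      exact famN_cons (shortcyc3' hpart hab hbd hda) (by
        intro x hx
        rcases List.mem_cons.1 hx with rfl | hx
        · exact has
        rcases List.mem_cons.1 hx with rfl | hx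
        · exact hbs
        rcases List.mem_cons.1 hx with rfl | hx
        · exact hds
        · simp at hx) hF
    · -- no directed triangle
      push_neg at hc3
      have hnc3 : ∀ a ∈ s, ∀ b ∈ s, ∀ c ∈ s, ¬(A a b ∧ A b c ∧ A c a) := by
        intro a ha b hb c hc h
        exact hc3 a ha b hb c hc h.1 h.2.1 h.2.2
      obtain ⟨S, hSsub, hSne, hSclosed, hSstrong⟩ := source_component (A := A) hne
      have htotS : ∀ u ∈ S, ∀ w ∈ S, p u ≠ p w → A u w ∨ A w u :=
        fun u hu w hw => htot u (hSsub hu) w (hSsub hw)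
      have hinS : ∀ x ∈ S, 3 * (k+1) + 1 ≤ inDeg (A := A) S x := by
        intro x hx
        classical
        have hsub : s.filter (fun y => A y x) ⊆ S.filter (fun y => A y x) := by
          intro y hy
          rw [Finset.mem_filter] at hy ⊢
          exact ⟨hSclosed x hx y hy.1 hy.2, hy.2⟩
        have h1 := hin x (hSsub hx)
        have h2 : inDeg (A := A) s x ≤ inDeg (A := A) S x := by
          rw [inDeg, inDeg]
          exact Finset.card_le_card hsub
        omega
      -- get a C4 in S
      obtain ⟨c, hcS1, hcS2⟩ := exists_shortcyc hanti hpart htotS hSne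
        (fun x hx => by have := hinS x hx; omega)
      rcases hcS1.1 with h3 | h4
      · obtain ⟨a, b, d, rfl, hab, hbd, hda⟩ := shortcyc_extract3 hcS1 h3
        exact absurd ⟨hab, hbd, hda⟩
          (hnc3 a (hSsub (hcS2 a (by simp))) b (hSsub (hcS2 b (by simp)))
            d (hSsub (hcS2 d (by simp))))
      obtain ⟨x1, x2, x3, x4, rfl, a12, a23, a34, a41, h13, h24⟩ := shortcyc_extract4 hcS1 h4
      have hx1S : x1 ∈ S := hcS2 x1 (by simp)
      have hx2S : x2 ∈ S := hcS2 x2 (by simp)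
      have hx3S : x3 ∈ S := hcS2 x3 (by simp)
      have hx4S : x4 ∈ S := hcS2 x4 (by simp)
      have hx1 : x1 ∈ s := hSsub hx1S
      have hx2 : x2 ∈ s := hSsub hx2S
      have hx3 : x3 ∈ s := hSsub hx3S
      have hx4 : x4 ∈ s := hSsub hx4S
      have hp13 : p x1 = p x3 := by
        by_contra hne13
        rcases htot x1 hx1 x3 hx3 hne13 with h | h
        · exact hnc3 x1 hx1 x3 hx3 x4 hx4 ⟨h, a34, a41⟩
        · exact hnc3 x1 hx1 x2 hx2 x3 hx3 ⟨a12, a23, h⟩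
      have hp24 : p x2 = p x4 := by
        by_contra hne24
        rcases htot x2 hx2 x4 hx4 hne24 with h | h
        · exact hnc3 x2 hx2 x4 hx4 x1 hx1 ⟨h, a41, a12⟩
        · exact hnc3 x2 hx2 x3 hx3 x4 hx4 ⟨a23, a34, h⟩
      -- S is bipartite
      have hbipS : ∀ z ∈ S, p z = p x1 ∨ p z = p x2 := by
        intro z hzS
        by_contra hcon
        push_neg at hcon
        obtain ⟨hzp1, hzp2⟩ := hcon
        have hzs : z ∈ s := hSsub hzS
        rcases dicho hpart htot hnc3 hx1 hx2 hx3 hx4 a12 a23 a34 a41 hp13 hp24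
            hzs hzp1 hzp2 with hdom | hdom
        · exact lemB_aux hanti hpart htot hnc3 hx1 hx2 hx3 hx4 hzs a12 a23 a34 a41
            hp13 hp24 hzp1 hzp2 hdom (hSstrong x1 hx1S z hzS)
        · -- flip everything
          have hanti' : ∀ u w, A w u → ¬ A u w := fun u w h h' => hanti _ _ h' h
          have hpart' : ∀ u w : V, A w u → p u ≠ p w :=
            fun u w h => (hpart _ _ h).symm
          have htot' : ∀ u ∈ s, ∀ w ∈ s, p u ≠ p w → A w u ∨ A u w :=
            fun u hu w hw hne' => (htot u hu w hw hne').symm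
          have hnc3' : ∀ a ∈ s, ∀ b ∈ s, ∀ c ∈ s, ¬(A b a ∧ A c b ∧ A a c) := by
            intro a ha b hb c hc h
            exact hnc3 c hc b hb a ha ⟨h.2.1, h.1, h.2.2⟩
          have hreach' : ReachIn (fun u w => A w u) s x4 z := by
            have h0 : ReachIn A s z x4 := hSstrong z hzS x4 hx4S
            exact reachIn_swap h0
          exact lemB_aux (A := fun u w => A w u) hanti' hpart' htot' hnc3'
            hx4 hx3 hx2 hx1 hzs a34 a23 a12 a41
            (hp24.symm) (hp13.symm)
            (by rw [← hp24]; exact hzp2) (by rw [← hp13]; exact hzp1)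
            ⟨hdom.2.2.2, hdom.2.2.1, hdom.2.1, hdom.1⟩ hreach'
      -- bipartite harvest
      have hinS' : ∀ x ∈ S, 2 * (k + 1) + 1 ≤ inDeg (A := A) S x := by
        intro x hx
        have := hinS x hx
        omega
      exact famN_mono hSsub (bip_fam hanti hpart (k+1) S (p x1) (p x2) htotS hbipS hinS' hSne)

end Digraph2


section PC
variable {V : Type*} (col : V → V → ℕ)

lemma pc3 {x y z : V} (e1 : col x y ≠ col y z) (e2 : col y z ≠ col z x)
    (e3 : col z x ≠ col x y) (h1 : x ≠ y) (h2 : y ≠ z) (h3 : x ≠ z) :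
    ∃ c : ZMod 3 → V, IsPCCycle col 3 c ∧ Set.range c = {x, y, z} := by
  set c : ZMod 3 → V := fun i => if i = 0 then x else if i = 1 then y else z with hc
  have hval : ∀ i : ZMod 3, i = 0 ∨ i = 1 ∨ i = 2 := by decide
  have c0 : c 0 = x := by simp [hc]
  have c1 : c 1 = y := by simp [hc, show (1:ZMod 3) ≠ 0 from by decide]
  have c2 : c 2 = z := by
    simp [hc, show (2:ZMod 3) ≠ 0 from by decide, show (2:ZMod 3) ≠ 1 from by decide]
  refine ⟨c, ⟨le_refl 3, ?_, ?_⟩, ?_⟩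
  · intro i j hij
    rcases hval i with rfl | rfl | rfl <;> rcases hval j with rfl | rfl | rfl <;>
      simp_all [c0, c1, c2]
  · intro i
    rcases hval i with rfl | rfl | rfl
    · rw [show (0 + 2 : ZMod 3) = 2 by decide, show (0 + 1 : ZMod 3) = 1 by decide,
        c0, c1, c2]; exact e1
    · rw [show (1 + 2 : ZMod 3) = 0 by decide, show (1 + 1 : ZMod 3) = 2 by decide,
        c1, c2, c0]; exact e2
    · rw [show (2 + 2 : ZMod 3) = 1 by decide, show (2 + 1 : ZMod 3) = 0 by decide,
        c2, c0, c1]; exact e3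
  · ext u
    constructor
    · rintro ⟨i, rfl⟩
      rcases hval i with rfl | rfl | rfl <;> simp [c0, c1, c2]
    · rintro (rfl | rfl | rfl)
      exacts [⟨0, c0⟩, ⟨1, c1⟩, ⟨2, c2⟩]

lemma pc4 {x y z w : V} (e1 : col x y ≠ col y z) (e2 : col y z ≠ col z w)
    (e3 : col z w ≠ col w x) (e4 : col w x ≠ col x y)
    (h1 : x ≠ y) (h2 : y ≠ z) (h3 : z ≠ w) (h4 : x ≠ w) (h5 : x ≠ z) (h6 : y ≠ w) :
    ∃ c : ZMod 4 → V, IsPCCycle col 4 c ∧ Set.range c = {x, y, z, w} := by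
  set c : ZMod 4 → V := fun i => if i = 0 then x else if i = 1 then y else
    if i = 2 then z else w with hc
  have hval : ∀ i : ZMod 4, i = 0 ∨ i = 1 ∨ i = 2 ∨ i = 3 := by decide
  have c0 : c 0 = x := by simp [hc]
  have c1 : c 1 = y := by simp [hc, show (1:ZMod 4) ≠ 0 from by decide]
  have c2 : c 2 = z := by
    simp [hc, show (2:ZMod 4) ≠ 0 from by decide, show (2:ZMod 4) ≠ 1 from by decide]
  have c3 : c 3 = w := by
    simp [hc, show (3:ZMod 4) ≠ 0 from by decide, show (3:ZMod 4) ≠ 1 from by decide,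
      show (3:ZMod 4) ≠ 2 from by decide]
  refine ⟨c, ⟨by norm_num, ?_, ?_⟩, ?_⟩
  · intro i j hij
    rcases hval i with rfl | rfl | rfl | rfl <;> rcases hval j with rfl | rfl | rfl | rfl <;>
      simp_all [c0, c1, c2, c3]
  · intro i
    rcases hval i with rfl | rfl | rfl | rfl
    · rw [show (0 + 2 : ZMod 4) = 2 by decide, show (0 + 1 : ZMod 4) = 1 by decide,
        c0, c1, c2]; exact e1
    · rw [show (1 + 2 : ZMod 4) = 3 by decide, show (1 + 1 : ZMod 4) = 2 by decide,
        c1, c2, c3]; exact e2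
    · rw [show (2 + 2 : ZMod 4) = 0 by decide, show (2 + 1 : ZMod 4) = 3 by decide,
        c2, c3, c0]; exact e3
    · rw [show (3 + 2 : ZMod 4) = 1 by decide, show (3 + 1 : ZMod 4) = 0 by decide,
        c3, c0, c1]; exact e4
  · ext u
    constructor
    · rintro ⟨i, rfl⟩
      rcases hval i with rfl | rfl | rfl | rfl <;> simp [c0, c1, c2, c3]
    · rintro (rfl | rfl | rfl | rfl)
      exacts [⟨0, c0⟩, ⟨1, c1⟩, ⟨2, c2⟩, ⟨3, c3⟩]

end PC

/-- If Δ^mon(G) ≤ n − 3k + 1, then either G contains k disjoint short PC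
cycles, or every vertex lies on a PC cycle of length 3 or 4. -/
theorem stmt7 (n k : ℕ) (hk : 1 ≤ k) (col : Fin n → Fin n → ℕ)
    (hsymm : ∀ u v, col u v = col v u)
    (hmon : ∀ v a, monDeg col v a + 3 * k ≤ n + 1) :
    HasKDisjointShortPCCycles col k ∨
      ∀ v : Fin n, ∃ (m : ℕ) (c : ZMod m → Fin n),
        IsPCCycle col m c ∧ m ≤ 4 ∧ v ∈ Set.range c := by
  classical
  by_cases hright : ∀ v : Fin n, ∃ (m : ℕ) (c : ZMod m → Fin n),
      IsPCCycle col m c ∧ m ≤ 4 ∧ v ∈ Set.range c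
  · exact Or.inr hright
  left
  push_neg at hright
  obtain ⟨v, hbad⟩ := hright
  -- basic counting helper
  have hmonF : ∀ (x : Fin n) (a : ℕ) (F : Finset (Fin n)),
      (∀ u ∈ F, u ≠ x ∧ col x u = a) → F.card ≤ monDeg col x a := by
    intro x a F hF
    have hsub : (↑F : Set (Fin n)) ⊆ {u | u ≠ x ∧ col x u = a} := fun u hu => hF u hu
    calc F.card = (↑F : Set (Fin n)).ncard := (Set.ncard_coe_finset F).symm
      _ ≤ _ := Set.ncard_le_ncard hsub (Set.toFinite _)
  -- no PC triangle through v
  have hnoT : ∀ u w : Fin n, u ≠ v → w ≠ v → col v u ≠ col v w →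
      col u w = col v u ∨ col u w = col v w := by
    intro u w hu hw hne
    by_contra hcon
    push_neg at hcon
    obtain ⟨h1, h2⟩ := hcon
    have huw : u ≠ w := fun hEq => hne (by rw [hEq])
    obtain ⟨c, hc, hrange⟩ := pc3 col (x := v) (y := u) (z := w)
      (Ne.symm h1) (by rw [hsymm w v]; exact h2)
      (by rw [hsymm w v]; exact Ne.symm hne) (Ne.symm hu) huw (Ne.symm hw)
    exact hbad 3 c hc (by norm_num) (by rw [hrange]; simp)
  -- no PC 4-cycle through v
  have hnoQ : ∀ u x w : Fin n, u ≠ v → x ≠ v → w ≠ v → u ≠ x → u ≠ w → x ≠ w →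
      ¬(col v u ≠ col u x ∧ col u x ≠ col x w ∧ col x w ≠ col w v ∧
        col w v ≠ col v u) := by
    intro u x w hu hx hw hux huw hxw hcon
    obtain ⟨e1, e2, e3, e4⟩ := hcon
    obtain ⟨c, hc, hrange⟩ := pc4 col (x := v) (y := u) (z := x) (w := w)
      e1 e2 e3 e4 (Ne.symm hu) hux hxw (Ne.symm hw) (Ne.symm hx) huw
    exact hbad 4 c hc (by norm_num) (by rw [hrange]; simp)
  -- digraph on Fin n \ {v}
  set p : Fin n → ℕ := fun u => col v u with hp
  set A : Fin n → Fin n → Prop := fun u w => col v u ≠ col v w ∧ col u w = col v u with hA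
  set s : Finset (Fin n) := Finset.univ.erase v with hs
  have hmems : ∀ u : Fin n, u ∈ s ↔ u ≠ v := by
    intro u; simp [hs]
  have hanti : ∀ u w : Fin n, A u w → ¬ A w u := by
    rintro u w ⟨h1, h2⟩ ⟨h3, h4⟩
    rw [← hsymm u w, h2] at h4
    exact h1 h4
  have hpart : ∀ u w : Fin n, A u w → p u ≠ p w := fun u w h => h.1
  have htot : ∀ u ∈ s, ∀ w ∈ s, p u ≠ p w → A u w ∨ A w u := by
    intro u hu w hw hne
    rcases hnoT u w ((hmems u).1 hu) ((hmems w).1 hw) hne with h | h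
    · exact Or.inl ⟨hne, h⟩
    · exact Or.inr ⟨Ne.symm hne, by rw [hsymm w u]; exact h⟩
  have hn1 : 0 < n := Fin.pos v
  have hscard : s.card + 1 = n := by
    rw [hs, Finset.card_erase_of_mem (Finset.mem_univ v)]
    simp
    omega
  -- in-degree bound
  have hin : ∀ x ∈ s, 3 * k ≤ inDeg (A := A) s x + 2 := by
    intro x hx
    have hxv : x ≠ v := (hmems x).1 hx
    set Cls : Finset (Fin n) := s.filter (fun u => col v u = col v x) with hCls
    set Out : Finset (Fin n) := s.filter (fun w => A x w) with hOut
    set Din : Finset (Fin n) := s.filter (fun w => A w x) with hDin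
    have hInDeg : inDeg (A := A) s x = Din.card := by
      rw [inDeg, hDin]
      congr 1
      exact Finset.filter_congr_decidable _ _ _
    have hd1 : Disjoint Cls Out := by
      rw [Finset.disjoint_left]
      intro u hu hu'
      rw [hCls, Finset.mem_filter] at hu
      rw [hOut, Finset.mem_filter] at hu'
      exact hu'.2.1 (by rw [hu.2])
    have hd2 : Disjoint Cls Din := by
      rw [Finset.disjoint_left]
      intro u hu hu'
      rw [hCls, Finset.mem_filter] at hu
      rw [hDin, Finset.mem_filter] at hu'
      exact hu'.2.1 (by rw [hu.2])
    have hd3 : Disjoint Out Din := by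
      rw [Finset.disjoint_left]
      intro u hu hu'
      rw [hOut, Finset.mem_filter] at hu
      rw [hDin, Finset.mem_filter] at hu'
      exact hanti _ _ hu.2 hu'.2
    have hunion : Cls ∪ Out ∪ Din = s := by
      apply Finset.Subset.antisymm
      · intro u hu
        rcases Finset.mem_union.1 hu with hu | hu
        · rcases Finset.mem_union.1 hu with hu | hu
          · exact (Finset.mem_filter.1 hu).1
          · exact (Finset.mem_filter.1 hu).1
        · exact (Finset.mem_filter.1 hu).1
      · intro w hw
        by_cases hcw : col v w = col v x
        · exact Finset.mem_union_left _ (Finset.mem_union_left _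
            (Finset.mem_filter.2 ⟨hw, hcw⟩))
        · have hne : p x ≠ p w := by
            simp only [hp]
            exact fun hEq => hcw hEq.symm
          rcases htot x hx w hw hne with h | h
          · exact Finset.mem_union_left _ (Finset.mem_union_right _
              (Finset.mem_filter.2 ⟨hw, h⟩))
          · exact Finset.mem_union_right _ (Finset.mem_filter.2 ⟨hw, h⟩)
    have hcu : (Cls ∪ Out ∪ Din).card = Cls.card + Out.card + Din.card := by
      rw [Finset.card_union_of_disjoint (by
        rw [Finset.disjoint_union_left]; exact ⟨hd2, hd3⟩),
        Finset.card_union_of_disjoint hd1]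
    have hcards : Cls.card + Out.card + Din.card + 1 = n := by
      rw [← hcu, hunion]
      exact hscard
    have hxCls : x ∈ Cls := Finset.mem_filter.2 ⟨hx, rfl⟩
    have hClsPos : 1 ≤ Cls.card := Finset.card_pos.2 ⟨x, hxCls⟩
    have hClsBound : Cls.card + 3 * k ≤ n + 1 := by
      have h1 : Cls.card ≤ monDeg col v (col v x) := by
        apply hmonF
        intro u hu
        rw [hCls, Finset.mem_filter] at hu
        exact ⟨(hmems u).1 hu.1, hu.2⟩
      have := hmon v (col v x)
      omega
    by_cases hOutE : Out.card = 0
    · omega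
    · have hOutNe : Out.Nonempty := Finset.card_pos.1 (by omega)
      obtain ⟨w0, hw0⟩ := hOutNe
      have hw0' := Finset.mem_filter.1 hw0
      have hw0s : w0 ∈ s := hw0'.1
      have hw0A : A x w0 := hw0'.2
      -- all other vertices of Cls send color (col v x) to x
      have hR2 : ∀ u ∈ Cls, u ≠ x → col x u = col v x := by
        intro u hu hux
        have hu' := Finset.mem_filter.1 hu
        have huv : u ≠ v := (hmems u).1 hu'.1
        have hucol : col v u = col v x := hu'.2
        by_contra hcon
        apply hnoQ u x w0 huv hxv ((hmems w0).1 hw0s) hux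
          (fun hEq => hw0A.1 (by rw [← hucol, hEq]))
          (fun hEq => hw0A.1 (by rw [hEq]))
        refine ⟨?_, ?_, ?_, ?_⟩
        · rw [hucol, hsymm u x]
          exact Ne.symm hcon
        · rw [hsymm u x, hw0A.2]
          exact hcon
        · rw [hw0A.2, hsymm w0 v]
          exact hw0A.1
        · rw [hsymm w0 v, hucol]
          exact Ne.symm hw0A.1
      -- monDeg of x in color col v x is at least Cls.card + Out.card
      have hmonx : Cls.card + Out.card ≤ monDeg col x (col v x) := by
        have hFsub : ∀ u ∈ insert v (Cls.erase x ∪ Out), u ≠ x ∧ col x u = col v x := by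
          intro u hu
          rcases Finset.mem_insert.1 hu with rfl | hu
          · exact ⟨Ne.symm hxv, by rw [hsymm u x]⟩
          rcases Finset.mem_union.1 hu with hu | hu
          · have h1 := Finset.mem_erase.1 hu
            exact ⟨h1.1, hR2 u h1.2 h1.1⟩
          · have h1 := Finset.mem_filter.1 hu
            refine ⟨fun hEq => h1.2.1 (by rw [hEq]), ?_⟩
            have := h1.2.2
            rw [hsymm x u] at this ⊢
            exact this
        have hcard : (insert v (Cls.erase x ∪ Out)).card = Cls.card + Out.card := by
          rw [Finset.card_insert_of_notMem, Finset.card_union_of_disjoint,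
            Finset.card_erase_of_mem hxCls]
          · omega
          · exact Finset.disjoint_of_subset_left (Finset.erase_subset _ _) hd1
          · intro hv
            rcases Finset.mem_union.1 hv with hv | hv
            · exact (hmems v).1 ((Finset.filter_subset _ _) (Finset.mem_of_mem_erase hv)) rfl
            · exact (hmems v).1 ((Finset.filter_subset _ _) hv) rfl
        rw [← hcard]
        exact hmonF x (col v x) _ hFsub
      have := hmon x (col v x)
      omega
  -- nonemptiness
  have hne : s.Nonempty := by
    rcases Finset.eq_empty_or_nonempty s with hE | h
    · exfalso
      have hall : ∀ u : Fin n, u = v := by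
        intro u
        by_contra hu
        exact Finset.notMem_empty u (hE ▸ (hmems u).2 hu)
      have hmd : monDeg col v (col v v + 1) = 0 := by
        have : {u : Fin n | u ≠ v ∧ col v u = col v v + 1} = ∅ := by
          ext u
          simp only [Set.mem_setOf_eq, Set.mem_empty_iff_false, iff_false, not_and]
          intro hu
          exact absurd (hall u) hu
        rw [monDeg, this, Set.ncard_empty]
      have hn2 : n ≤ 1 := by
        by_contra hcon
        push_neg at hcon
        have h0 : (⟨0, by omega⟩ : Fin n) = v := hall _
        have h1 : (⟨1, by omega⟩ : Fin n) = v := hall _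
        rw [← h1] at h0
        simp [Fin.ext_iff] at h0
      have := hmon v (col v v + 1)
      omega
    · exact h
  -- apply the tournament theorem
  obtain ⟨k', rfl⟩ : ∃ k', k = k' + 1 := ⟨k - 1, by omega⟩
  have hin' : ∀ x ∈ s, 3 * k' + 1 ≤ inDeg (A := A) s x := by
    intro x hx
    have := hin x hx
    omega
  have hfam : FamN A s (k' + 1) := mt_fam hanti hpart k' s htot hin' hne
  obtain ⟨L, hL1, hL2, hL3⟩ := hfam
  have hget : ∀ j : Fin (k' + 1), ∃ (m : ℕ) (cf : ZMod m → Fin n),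
      (IsPCCycle col m cf ∧ m ≤ 4) ∧
      Set.range cf = {y | y ∈ L.get (Fin.cast hL1.symm j)} := by
    intro j
    set cl := L.get (Fin.cast hL1.symm j) with hcl
    have hclmem : cl ∈ L := List.get_mem L _
    obtain ⟨hclSC, hclS⟩ := hL2 cl hclmem
    rcases hclSC.1 with h3 | h4
    · obtain ⟨a, b, d, hEq, hab, hbd, hda⟩ := shortcyc_extract3 hclSC h3
      have e1 : col a b ≠ col b d := by rw [hab.2, hbd.2]; exact hab.1
      have e2 : col b d ≠ col d a := by rw [hbd.2, hda.2]; exact hbd.1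
      have e3 : col d a ≠ col a b := by rw [hda.2, hab.2]; exact hda.1
      obtain ⟨cf, hpc, hrange⟩ := pc3 col e1 e2 e3
        (fun h => hab.1 (by rw [h])) (fun h => hbd.1 (by rw [h]))
        (fun h => hda.1 (by rw [h]))
      refine ⟨3, cf, ⟨hpc, by norm_num⟩, ?_⟩
      rw [hrange, hEq]
      ext y
      simp
    · obtain ⟨a, b, d, e, hEq, hab, hbd, hde, hea, had, hbe⟩ := shortcyc_extract4 hclSC h4
      have e1 : col a b ≠ col b d := by rw [hab.2, hbd.2]; exact hab.1
      have e2 : col b d ≠ col d e := by rw [hbd.2, hde.2]; exact hbd.1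
      have e3 : col d e ≠ col e a := by rw [hde.2, hea.2]; exact hde.1
      have e4 : col e a ≠ col a b := by rw [hea.2, hab.2]; exact hea.1
      obtain ⟨cf, hpc, hrange⟩ := pc4 col e1 e2 e3 e4
        (fun h => hab.1 (by rw [h])) (fun h => hbd.1 (by rw [h]))
        (fun h => hde.1 (by rw [h])) (fun h => hea.1 (by rw [h]))
        had hbe
      refine ⟨4, cf, ⟨hpc, by norm_num⟩, ?_⟩
      rw [hrange, hEq]
      ext y
      simp
  choose m cf hpc hrange using hget
  refine ⟨m, cf, hpc, ?_⟩
  intro j j' hjj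
  rw [Set.disjoint_left]
  intro y hyj hyj'
  rw [hrange j] at hyj
  rw [hrange j'] at hyj'
  simp only [Set.mem_setOf_eq] at hyj hyj'
  have hpw := List.pairwise_iff_get.1 hL3
  rcases lt_or_gt_of_ne (fun hEq : (Fin.cast hL1.symm j) = (Fin.cast hL1.symm j') =>
      hjj (by simpa [Fin.ext_iff] using hEq)) with h | h
  · exact hpw _ _ h y hyj hyj'
  · exact hpw _ _ h y hyj' hyj
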